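/- arXiv:2310.01145 — 6 statements merged into one kernel-verified Lean document; each statement's English description precedes it below -/
import Mathlib

section
/- Let ν ∈ ℕ. For h ∈ ℝ let Φ̆(h) be the (ν+1)×(ν+1) real matrix with entries [Φ̆(h)]_{ij} = h^{j−i}/(j−i)! for 0 ≤ i ≤ j ≤ ν and 0 otherwise, and for h ≥ 0 let Q̆(h) be the (ν+1)×(ν+1) real matrix with entries [Q̆(h)]_{ij} = h^{2ν+1−i−j}/((2ν+1−i−j)(ν−i)!(ν−j)!). Then for all s, t ≥ 0, Q̆(s+t) = Φ̆(t) · Q̆(s) · Φ̆(t)ᵀ + Q̆(t). -/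
open Matrix

lemma sumA (n : ℕ) (t τ : ℝ) :
    ∑ m ∈ Finset.range (n + 1),
      t ^ m / m.factorial * (τ ^ (n - m) / (n - m).factorial)
      = (t + τ) ^ n / n.factorial := by
  rw [add_pow, Finset.sum_div]
  refine Finset.sum_congr rfl fun m hm => ?_
  have hmn : m ≤ n := Nat.lt_succ_iff.mp (Finset.mem_range.mp hm)
  rw [Nat.cast_choose ℝ hmn]
  have h1 : (m.factorial : ℝ) ≠ 0 := Nat.cast_ne_zero.mpr m.factorial_ne_zero
  have h2 : ((n - m).factorial : ℝ) ≠ 0 := Nat.cast_ne_zero.mpr (n - m).factorial_ne_zero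
  have h3 : (n.factorial : ℝ) ≠ 0 := Nat.cast_ne_zero.mpr n.factorial_ne_zero
  field_simp

lemma sumPhi (ν : ℕ) (i : Fin (ν + 1)) (t τ : ℝ) :
    ∑ k : Fin (ν + 1),
      (if (i : ℕ) ≤ (k : ℕ) then
        t ^ ((k : ℕ) - (i : ℕ)) / Nat.factorial ((k : ℕ) - (i : ℕ)) else 0)
        * (τ ^ (ν - (k : ℕ)) / (ν - (k : ℕ)).factorial)
      = (t + τ) ^ (ν - (i : ℕ)) / (ν - (i : ℕ)).factorial := by
  have hi : (i : ℕ) ≤ ν := Nat.lt_succ_iff.mp i.isLt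
  rw [Fin.sum_univ_eq_sum_range (fun k : ℕ =>
    (if (i : ℕ) ≤ k then t ^ (k - (i : ℕ)) / Nat.factorial (k - (i : ℕ)) else 0)
      * (τ ^ (ν - k) / (ν - k).factorial))]
  rw [Finset.range_eq_Ico,
    ← Finset.sum_Ico_consecutive _ (Nat.zero_le (i : ℕ)) (by omega : (i : ℕ) ≤ ν + 1)]
  have h0 : ∑ k ∈ Finset.Ico 0 (i : ℕ),
      (if (i : ℕ) ≤ k then t ^ (k - (i : ℕ)) / Nat.factorial (k - (i : ℕ)) else 0)
        * (τ ^ (ν - k) / (ν - k).factorial) = 0 := by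
    refine Finset.sum_eq_zero fun k hk => ?_
    have : k < (i : ℕ) := (Finset.mem_Ico.mp hk).2
    rw [if_neg (by omega)]
    ring
  rw [h0, zero_add, Finset.sum_Ico_eq_sum_range]
  have h1 : ν + 1 - (i : ℕ) = (ν - (i : ℕ)) + 1 := by omega
  rw [h1, ← sumA (ν - (i : ℕ)) t τ]
  refine Finset.sum_congr rfl fun m hm => ?_
  have hm' : m ≤ ν - (i : ℕ) := Nat.lt_succ_iff.mp (Finset.mem_range.mp hm)
  rw [if_pos (by omega)]
  have e1 : (i : ℕ) + m - (i : ℕ) = m := by omega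
  have e2 : ν - ((i : ℕ) + m) = ν - (i : ℕ) - m := by omega
  rw [e1, e2]

lemma intB (a b : ℕ) (s t : ℝ) :
    ∫ τ in (0:ℝ)..s, (t + τ) ^ a / a.factorial * ((t + τ) ^ b / b.factorial)
      = ((t + s) ^ (a + b + 1) - t ^ (a + b + 1)) /
          ((a + b + 1) * a.factorial * b.factorial) := by
  have h : (fun τ : ℝ => (t + τ) ^ a / a.factorial * ((t + τ) ^ b / b.factorial))
      = fun τ : ℝ => (t + τ) ^ (a + b) / (a.factorial * b.factorial) := by
    funext τ; rw [pow_add]; ring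
  rw [h]
  rw [intervalIntegral.integral_div]
  rw [intervalIntegral.integral_comp_add_left (fun u : ℝ => u ^ (a + b))]
  rw [add_zero, integral_pow]
  rw [div_div]
  push_cast
  ring_nf

lemma intQ (c d : ℕ) (s : ℝ) :
    ∫ τ in (0:ℝ)..s, τ ^ c / c.factorial * (τ ^ d / d.factorial)
      = s ^ (c + d + 1) / ((c + d + 1) * c.factorial * d.factorial) := by
  have := intB c d s 0
  simpa using this

/-- Chapman–Kolmogorov consistency of the `ν`-times integrated Wiener process:
`Q̆(s+t) = Φ̆(t) * Q̆(s) * Φ̆(t)ᵀ + Q̆(t)` for `s, t ≥ 0`. -/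
theorem iwp_covariance_chapman_kolmogorov (ν : ℕ)
    (Φ : ℝ → Matrix (Fin (ν + 1)) (Fin (ν + 1)) ℝ)
    (hΦ : ∀ (h : ℝ) (i j : Fin (ν + 1)),
      Φ h i j =
        if (i : ℕ) ≤ (j : ℕ) then
          h ^ ((j : ℕ) - (i : ℕ)) / Nat.factorial ((j : ℕ) - (i : ℕ))
        else 0)
    (Q : ℝ → Matrix (Fin (ν + 1)) (Fin (ν + 1)) ℝ)
    (hQ : ∀ (h : ℝ), 0 ≤ h → ∀ (i j : Fin (ν + 1)),
      Q h i j =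
        h ^ (2 * ν + 1 - (i : ℕ) - (j : ℕ)) /
          ((2 * ν + 1 - (i : ℕ) - (j : ℕ) : ℕ) *
            Nat.factorial (ν - (i : ℕ)) * Nat.factorial (ν - (j : ℕ))))
    (s t : ℝ) (hs : 0 ≤ s) (ht : 0 ≤ t) :
    Q (s + t) = Φ t * Q s * (Φ t)ᵀ + Q t := by
  ext i j
  have hi : (i : ℕ) ≤ ν := Nat.lt_succ_iff.mp i.isLt
  have hj : (j : ℕ) ≤ ν := Nat.lt_succ_iff.mp j.isLt
  set a := ν - (i : ℕ) with ha
  set b := ν - (j : ℕ) with hb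
  set g : Fin (ν + 1) → ℝ → ℝ :=
    fun k τ => τ ^ (ν - (k : ℕ)) / (ν - (k : ℕ)).factorial with hg
  have hgcont : ∀ k : Fin (ν + 1), Continuous (g k) := by
    intro k; exact (continuous_pow _).div_const _
  have hQs : ∀ k l : Fin (ν + 1), Q s k l = ∫ τ in (0:ℝ)..s, g k τ * g l τ := by
    intro k l
    have hk : (k : ℕ) ≤ ν := Nat.lt_succ_iff.mp k.isLt
    have hl : (l : ℕ) ≤ ν := Nat.lt_succ_iff.mp l.isLt
    have hM : 2 * ν + 1 - (k : ℕ) - (l : ℕ) = (ν - (k : ℕ)) + (ν - (l : ℕ)) + 1 := by omega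
    rw [hQ s hs, intQ, hM]
    push_cast
    ring
  have key : ∑ l : Fin (ν + 1), (∑ k : Fin (ν + 1), Φ t i k * Q s k l) * (Φ t)ᵀ l j
      = ((t + s) ^ (a + b + 1) - t ^ (a + b + 1)) /
          ((a + b + 1) * a.factorial * b.factorial) := by
    have e1 : ∀ τ : ℝ,
        (∑ k : Fin (ν + 1), Φ t i k * g k τ) * (∑ l : Fin (ν + 1), Φ t j l * g l τ)
          = ∑ k : Fin (ν + 1), ∑ l : Fin (ν + 1), Φ t i k * (g k τ * g l τ) * Φ t j l := by
      intro τ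
      rw [Finset.sum_mul_sum]
      exact Finset.sum_congr rfl fun k _ => Finset.sum_congr rfl fun l _ => by ring
    have e2 : ∀ τ : ℝ,
        (∑ k : Fin (ν + 1), Φ t i k * g k τ) = (t + τ) ^ a / a.factorial := by
      intro τ
      simp_rw [hΦ t i]
      exact sumPhi ν i t τ
    have e3 : ∀ τ : ℝ,
        (∑ l : Fin (ν + 1), Φ t j l * g l τ) = (t + τ) ^ b / b.factorial := by
      intro τ
      simp_rw [hΦ t j]
      exact sumPhi ν j t τ
    have hcont : ∀ k l : Fin (ν + 1),
        Continuous (fun τ => Φ t i k * (g k τ * g l τ) * Φ t j l) :=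
      fun k l => (continuous_const.mul ((hgcont k).mul (hgcont l))).mul continuous_const
    calc ∑ l : Fin (ν + 1), (∑ k : Fin (ν + 1), Φ t i k * Q s k l) * (Φ t)ᵀ l j
        = ∑ k : Fin (ν + 1), ∑ l : Fin (ν + 1),
            ∫ τ in (0:ℝ)..s, Φ t i k * (g k τ * g l τ) * Φ t j l := by
          rw [Finset.sum_comm]
          refine Finset.sum_congr rfl fun l _ => ?_
          rw [Matrix.transpose_apply, Finset.sum_mul]
          refine Finset.sum_congr rfl fun k _ => ?_
          rw [hQs k l, intervalIntegral.integral_mul_const,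
            intervalIntegral.integral_const_mul]
      _ = ∑ k : Fin (ν + 1), ∫ τ in (0:ℝ)..s, ∑ l : Fin (ν + 1),
            Φ t i k * (g k τ * g l τ) * Φ t j l := by
          refine Finset.sum_congr rfl fun k _ => ?_
          exact (intervalIntegral.integral_finset_sum fun l _ =>
            (hcont k l).intervalIntegrable _ _).symm
      _ = ∫ τ in (0:ℝ)..s, ∑ k : Fin (ν + 1), ∑ l : Fin (ν + 1),
            Φ t i k * (g k τ * g l τ) * Φ t j l := by
          exact (intervalIntegral.integral_finset_sum fun k _ =>
            Continuous.intervalIntegrable (by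
              exact continuous_finset_sum _ fun l _ => hcont k l) _ _).symm
      _ = ∫ τ in (0:ℝ)..s, (t + τ) ^ a / a.factorial * ((t + τ) ^ b / b.factorial) := by
          refine intervalIntegral.integral_congr fun τ _ => ?_
          rw [← e1, e2, e3]
      _ = ((t + s) ^ (a + b + 1) - t ^ (a + b + 1)) /
            ((a + b + 1) * a.factorial * b.factorial) := intB a b s t
  rw [Matrix.add_apply, Matrix.mul_apply]
  simp_rw [Matrix.mul_apply]
  rw [key, hQ (s + t) (by positivity) i j, hQ t ht i j]
  have hM : 2 * ν + 1 - (i : ℕ) - (j : ℕ) = a + b + 1 := by omega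
  rw [hM]
  push_cast
  rw [← add_div]
  ring
end

section
/- Fix n ∈ ℕ and consider triples (E, g, P) with E an n×n real matrix, g ∈ ℝⁿ, and P an n×n real matrix. Define the binary operation (E_i, g_i, P_i) ⊗ₛ (E_j, g_j, P_j) := (E_i·E_j, E_i·g_j + g_i, E_i·P_j·E_iᵀ + P_i). Then ⊗ₛ is associative: for all triples b₁, b₂, b₃, (b₁ ⊗ₛ b₂) ⊗ₛ b₃ = b₁ ⊗ₛ (b₂ ⊗ₛ b₃). -/
open Matrix

/-- A smoothing element: an affine-Gaussian conditional `N(E y + g, P)`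
parameterized by `(E, g, P)`. -/
def smoothingOp (n : ℕ)
    (bi bj : Matrix (Fin n) (Fin n) ℝ × (Fin n → ℝ) × Matrix (Fin n) (Fin n) ℝ) :
    Matrix (Fin n) (Fin n) ℝ × (Fin n → ℝ) × Matrix (Fin n) (Fin n) ℝ :=
  (bi.1 * bj.1, bi.1 *ᵥ bj.2.1 + bi.2.1, bi.1 * bj.2.2 * bi.1ᵀ + bi.2.2)

/-- The associative smoothing operator of the time-parallel Rauch–Tung–Striebel
smoother is associative. -/
theorem smoothingOp_assoc (n : ℕ)
    (b₁ b₂ b₃ : Matrix (Fin n) (Fin n) ℝ × (Fin n → ℝ) × Matrix (Fin n) (Fin n) ℝ) :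
    smoothingOp n (smoothingOp n b₁ b₂) b₃ = smoothingOp n b₁ (smoothingOp n b₂ b₃) := by
  simp only [smoothingOp, Prod.mk.injEq, transpose_mul]
  refine ⟨mul_assoc _ _ _, ?_, ?_⟩
  · simp [mulVec_add, mulVec_mulVec, add_assoc]
  · simp [Matrix.add_mul, Matrix.mul_add, mul_assoc, add_assoc]
end

section
/- Let C and J be n×n real positive semidefinite (symmetric) matrices. Then the matrix I + C·J is invertible. -/
open Matrix

/-- For positive semidefinite real matrices `C` and `J`, the matrix `I + C * J`
is invertible. -/
theorem isUnit_one_add_psd_mul_psd (n : ℕ) (C J : Matrix (Fin n) (Fin n) ℝ)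
    (hC : C.PosSemidef) (hJ : J.PosSemidef) :
    IsUnit (1 + C * J) := by
  rw [← Matrix.mulVec_injective_iff_isUnit]
  have key : ∀ x, (1 + C * J) *ᵥ x = 0 → x = 0 := by
    intro x h
    have h' : x + C *ᵥ (J *ᵥ x) = 0 := by
      simpa [Matrix.add_mulVec, Matrix.mulVec_mulVec] using h
    -- multiply by J on the left
    have h2 : J *ᵥ x + J *ᵥ (C *ᵥ (J *ᵥ x)) = 0 := by
      have := congrArg (J *ᵥ ·) h'
      simpa [Matrix.mulVec_add] using this
    have hJT : Jᵀ = J := by simpa [Matrix.IsSymm] using hJ.isHermitian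
    have e1 : x ⬝ᵥ (J *ᵥ (C *ᵥ (J *ᵥ x))) = (J *ᵥ x) ⬝ᵥ (C *ᵥ (J *ᵥ x)) := by
      rw [Matrix.dotProduct_mulVec, ← Matrix.mulVec_transpose, hJT]
    have hquad : x ⬝ᵥ (J *ᵥ x) + (J *ᵥ x) ⬝ᵥ (C *ᵥ (J *ᵥ x)) = 0 := by
      have h3 := congrArg (fun v => x ⬝ᵥ v) h2
      simp only [dotProduct_add, dotProduct_zero] at h3
      rw [e1] at h3
      exact h3
    have h1nn : (0:ℝ) ≤ x ⬝ᵥ (J *ᵥ x) := by simpa using hJ.dotProduct_mulVec_nonneg x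
    have h2nn : (0:ℝ) ≤ (J *ᵥ x) ⬝ᵥ (C *ᵥ (J *ᵥ x)) := by simpa using hC.dotProduct_mulVec_nonneg (J *ᵥ x)
    have h2z : (J *ᵥ x) ⬝ᵥ (C *ᵥ (J *ᵥ x)) = 0 := by linarith
    have hCz : C *ᵥ (J *ᵥ x) = 0 := by
      have := (hC.dotProduct_mulVec_zero_iff (J *ᵥ x)).mp (by simpa using h2z)
      exact this
    simpa [hCz] using h'
  intro x y hxy
  have : (1 + C * J) *ᵥ (x - y) = 0 := by
    rw [Matrix.mulVec_sub, hxy, sub_self]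
  exact sub_eq_zero.mp (key _ this)
end

section
/- Let J be an n×n real positive semidefinite (symmetric) matrix, let L be an n×p real matrix, and set C = L·Lᵀ. Then I + C·J and I_p + Lᵀ·J·L are invertible and (I + C·J)^{-1}·C = L·(I_p + Lᵀ·J·L)^{-1}·Lᵀ. -/
open Matrix

/-- Push-through identity underlying the square-root form of the associative
filtering operator: for PSD `J` and `C = L * Lᵀ`, both `I + C * J` and
`I + Lᵀ * J * L` are invertible, and
`(I + C * J)⁻¹ * C = L * (I + Lᵀ * J * L)⁻¹ * Lᵀ`. -/
theorem psd_push_through (n p : ℕ) (J : Matrix (Fin n) (Fin n) ℝ)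
    (hJ : J.PosSemidef) (L : Matrix (Fin n) (Fin p) ℝ)
    (C : Matrix (Fin n) (Fin n) ℝ) (hC : C = L * Lᵀ) :
    IsUnit (1 + C * J) ∧ IsUnit ((1 : Matrix (Fin p) (Fin p) ℝ) + Lᵀ * J * L) ∧
      (1 + C * J)⁻¹ * C = L * ((1 : Matrix (Fin p) (Fin p) ℝ) + Lᵀ * J * L)⁻¹ * Lᵀ := by
  have hLT : Lᵀ = Lᴴ := by
    ext i j; simp [conjTranspose_apply]
  have hK : ((1 : Matrix (Fin p) (Fin p) ℝ) + Lᵀ * J * L).PosDef := by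
    have h1 : (1 : Matrix (Fin p) (Fin p) ℝ).PosDef := Matrix.PosDef.one
    have h2 : (Lᵀ * J * L).PosSemidef := by
      rw [hLT]; exact hJ.conjTranspose_mul_mul_same L
    exact h1.add_posSemidef h2
  have hKu : IsUnit ((1 : Matrix (Fin p) (Fin p) ℝ) + Lᵀ * J * L) := hK.isUnit
  have hKd : IsUnit ((1 : Matrix (Fin p) (Fin p) ℝ) + Lᵀ * J * L).det :=
    hK.det_pos.ne'.isUnit
  have hdet : (1 + C * J).det = ((1 : Matrix (Fin p) (Fin p) ℝ) + Lᵀ * J * L).det := by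
    rw [hC, add_comm, add_comm (1 : Matrix (Fin p) (Fin p) ℝ), Matrix.mul_assoc,
      Matrix.det_mul_add_one_comm, Matrix.mul_assoc]
  have hCu : IsUnit (1 + C * J) := (Matrix.isUnit_iff_isUnit_det _).2 (hdet ▸ hKd)
  refine ⟨hCu, hKu, ?_⟩
  set K := (1 : Matrix (Fin p) (Fin p) ℝ) + Lᵀ * J * L with hKdef
  have h1 : (1 + C * J) * L = L * K := by
    rw [hKdef, hC, Matrix.add_mul, Matrix.one_mul, Matrix.mul_add, Matrix.mul_one,
      Matrix.mul_assoc, Matrix.mul_assoc, Matrix.mul_assoc]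
  have key : (1 + C * J) * (L * K⁻¹ * Lᵀ) = C := by
    rw [← Matrix.mul_assoc, ← Matrix.mul_assoc, h1, Matrix.mul_assoc L K K⁻¹,
      Matrix.mul_nonsing_inv _ hKd, Matrix.mul_one, hC]
  have := hCu.invertible
  calc (1 + C * J)⁻¹ * C
      = (1 + C * J)⁻¹ * ((1 + C * J) * (L * K⁻¹ * Lᵀ)) := by rw [key]
    _ = L * K⁻¹ * Lᵀ := by rw [Matrix.inv_mul_cancel_left_of_invertible]
end

section
/- Let C and J be n×n real positive semidefinite (symmetric) matrices. Then the matrix (I + C·J)^{-1}·C is symmetric and positive semidefinite. -/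
open Matrix
open scoped MatrixOrder

/-- For positive semidefinite real matrices `C` and `J`, the matrix
`(1 + C * J)⁻¹ * C` is again symmetric positive semidefinite. -/
theorem posSemidef_inv_one_add_mul (n : ℕ) (C J : Matrix (Fin n) (Fin n) ℝ)
    (hC : C.PosSemidef) (hJ : J.PosSemidef) :
    ((1 + C * J)⁻¹ * C).PosSemidef := by
  set S := CFC.sqrt C with hSdef
  have hS : S.PosSemidef := (CFC.sqrt_nonneg C).posSemidef
  have hSS : S * S = C := CFC.sqrt_mul_sqrt_self C hC.nonneg
  have hSH : Sᴴ = S := hS.isHermitian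
  set M : Matrix (Fin n) (Fin n) ℝ := 1 + S * J * S with hMdef
  have hSJS : (S * J * S).PosSemidef := by
    have := hJ.mul_mul_conjTranspose_same S
    rwa [hSH] at this
  have hM : M.PosDef := Matrix.PosDef.one.add_posSemidef hSJS
  have hMunit : IsUnit M.det := hM.det_pos.ne'.isUnit
  have hdet : (1 + C * J).det = M.det := by
    rw [hMdef, ← hSS, Matrix.mul_assoc, Matrix.det_one_add_mul_comm]
  have hunit : IsUnit (1 + C * J).det := hdet ▸ hMunit
  have key : (1 + C * J) * (S * M⁻¹ * S) = C := by
    have h1 : (1 + C * J) * (S * M⁻¹ * S) = S * (M * M⁻¹) * S := by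
      rw [hMdef, ← hSS]
      noncomm_ring
    rw [h1, Matrix.mul_nonsing_inv _ hMunit, Matrix.mul_one, hSS]
  have heq : (1 + C * J)⁻¹ * C = S * M⁻¹ * S := by
    calc (1 + C * J)⁻¹ * C = (1 + C * J)⁻¹ * ((1 + C * J) * (S * M⁻¹ * S)) := by rw [key]
    _ = S * M⁻¹ * S := by
        rw [← Matrix.mul_assoc, Matrix.nonsing_inv_mul _ hunit, Matrix.one_mul]
  rw [heq]
  have := hM.inv.posSemidef.mul_mul_conjTranspose_same S
  rwa [hSH] at this
end

section
/- Let P be an n×n real matrix with P = U·Uᵀ for some n×p real matrix U, let R be an m×m real matrix with R = V·Vᵀ for some m×q real matrix V, and let H be an m×n real matrix. Suppose Ψ11 (m×m), Ψ21 (n×m), Ψ22 (n×n) are real matrices satisfying the block Gram identities Ψ11·Ψ11ᵀ = H·P·Hᵀ + R, Ψ21·Ψ11ᵀ = P·Hᵀ, and Ψ21·Ψ21ᵀ + Ψ22·Ψ22ᵀ = P (these hold for the blocks of the block-lower-triangular matrix tria([[H·U, V],[U, 0]])). If Ψ11 is invertible, then, writing S := H·P·Hᵀ + R and K := Ψ21·Ψ11^{-1},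 one has K = P·Hᵀ·S^{-1} and Ψ22·Ψ22ᵀ = P − P·Hᵀ·S^{-1}·H·P. -/
open Matrix

/-- In the square-root Kalman update, the blocks `Ψ11, Ψ21, Ψ22` of the
triangularization satisfy: the gain `K = Ψ21 * Ψ11⁻¹` equals the standard
Kalman gain `P Hᵀ S⁻¹`, and `Ψ22 * Ψ22ᵀ` equals the standard updated covariance
`P − P Hᵀ S⁻¹ H P`. -/
theorem sqrt_kalman_update (n m p q : ℕ)
    (P : Matrix (Fin n) (Fin n) ℝ) (U : Matrix (Fin n) (Fin p) ℝ)
    (hP : P = U * Uᵀ)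
    (R : Matrix (Fin m) (Fin m) ℝ) (V : Matrix (Fin m) (Fin q) ℝ)
    (hR : R = V * Vᵀ)
    (H : Matrix (Fin m) (Fin n) ℝ)
    (Ψ11 : Matrix (Fin m) (Fin m) ℝ)
    (Ψ21 : Matrix (Fin n) (Fin m) ℝ)
    (Ψ22 : Matrix (Fin n) (Fin n) ℝ)
    (h11 : Ψ11 * Ψ11ᵀ = H * P * Hᵀ + R)
    (h21 : Ψ21 * Ψ11ᵀ = P * Hᵀ)
    (h22 : Ψ21 * Ψ21ᵀ + Ψ22 * Ψ22ᵀ = P)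
    (hinv : IsUnit Ψ11)
    (S : Matrix (Fin m) (Fin m) ℝ) (hS : S = H * P * Hᵀ + R)
    (K : Matrix (Fin n) (Fin m) ℝ) (hK : K = Ψ21 * Ψ11⁻¹) :
    K = P * Hᵀ * S⁻¹ ∧ Ψ22 * Ψ22ᵀ = P - P * Hᵀ * S⁻¹ * H * P := by
  have hS' : S = Ψ11 * Ψ11ᵀ := by rw [hS, h11]
  have hinvT : IsUnit Ψ11ᵀ := by
    rw [Matrix.isUnit_iff_isUnit_det] at hinv ⊢
    rwa [Matrix.det_transpose]
  have hSinv : S⁻¹ = Ψ11ᵀ⁻¹ * Ψ11⁻¹ := by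
    rw [hS', Matrix.mul_inv_rev]
  have hgain : P * Hᵀ * S⁻¹ = Ψ21 * Ψ11⁻¹ := by
    rw [hSinv, ← h21, Matrix.mul_assoc, ← Matrix.mul_assoc Ψ11ᵀ,
      Matrix.mul_nonsing_inv _ ((Matrix.isUnit_iff_isUnit_det _).mp hinvT),
      Matrix.one_mul]
  constructor
  · rw [hK, hgain]
  · have h21' : Ψ21 = P * Hᵀ * Ψ11ᵀ⁻¹ := by
      rw [← h21, Matrix.mul_assoc,
        Matrix.mul_nonsing_inv _ ((Matrix.isUnit_iff_isUnit_det _).mp hinvT),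
        Matrix.mul_one]
    have hPsym : Pᵀ = P := by rw [hP]; simp [Matrix.transpose_mul]
    have key : Ψ21 * Ψ21ᵀ = P * Hᵀ * S⁻¹ * H * P := by
      calc Ψ21 * Ψ21ᵀ = (P * Hᵀ * Ψ11ᵀ⁻¹) * Ψ11⁻¹ * (H * P) := by
            conv_lhs => rw [h21']
            simp only [Matrix.transpose_mul, Matrix.transpose_nonsing_inv,
              Matrix.transpose_transpose, hPsym, Matrix.mul_assoc]
        _ = P * Hᵀ * S⁻¹ * H * P := by
            rw [hSinv]
            simp only [Matrix.mul_assoc]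
    have := eq_sub_of_add_eq' h22
    rw [this, key]
end
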